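/- Let N be a positive natural number and B, m₁, m₂ natural numbers with m₁ ≤ B and m₂ ≤ B. For i ∈ {1,2}, let P_i be the probability distribution on ℕ of m_i + X, where X is uniformly distributed on {0, 1, …, N−1}. Then ∑_{k ∈ ℕ} |P₁(k) − P₂(k)| ≤ 2·B/N. (Adding a uniformly random integer mask from a range much larger than the message bound statistically hides the message: the statistical distance between the masked distributions of any two bounded messages is at most B/N. This is the almost-perfect integer blinding property used for the padded blinding factors in the DB-RSM protocol.) -/
import Mathlib

lemma ind_summable (a b : ℕ) (c : ℝ) :
    Summable (fun k : ℕ => if a ≤ k ∧ k < b then c else 0) := by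
  apply summable_of_ne_finset_zero (s := Finset.Ico a b)
  intro k hk
  simp only [Finset.mem_Ico, not_and, not_lt] at hk
  split_ifs with h
  · exact absurd h.2 (not_lt.mpr (hk h.1))
  · rfl

lemma ind_tsum (a b : ℕ) (c : ℝ) :
    ∑' k : ℕ, (if a ≤ k ∧ k < b then c else 0) = (b - a : ℕ) * c := by
  rw [tsum_eq_sum (s := Finset.Ico a b)]
  · rw [Finset.sum_congr rfl (fun k hk => if_pos (Finset.mem_Ico.mp hk)),
      Finset.sum_const, Nat.card_Ico, nsmul_eq_mul]
  · intro k hk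
    simp only [Finset.mem_Ico, not_and, not_lt] at hk
    split_ifs with h
    · exact absurd h.2 (not_lt.mpr (hk h.1))
    · rfl

lemma aux (N m₁ m₂ : ℕ) (h : m₁ ≤ m₂) :
    ∑' k : ℕ,
        |(if m₁ ≤ k ∧ k < m₁ + N then (1 : ℝ) / N else 0) -
          (if m₂ ≤ k ∧ k < m₂ + N then (1 : ℝ) / N else 0)| ≤
      2 * (m₂ - m₁ : ℕ) / N := by
  have hc : (0:ℝ) ≤ 1/N := by positivity
  have hle : ∀ k : ℕ,
      |(if m₁ ≤ k ∧ k < m₁ + N then (1 : ℝ) / N else 0) -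
        (if m₂ ≤ k ∧ k < m₂ + N then (1 : ℝ) / N else 0)| ≤
      (if m₁ ≤ k ∧ k < m₂ then (1:ℝ)/N else 0) +
        (if m₁ + N ≤ k ∧ k < m₂ + N then (1:ℝ)/N else 0) := by
    intro k
    split_ifs with h1 h2 h3 h4 h5 h6 h7 h8 h9 h10 h11 h12 <;>
      first
      | (exfalso; omega)
      | (simp only [sub_zero, zero_sub, sub_self, abs_zero, abs_neg,
          abs_of_nonneg hc, add_zero, zero_add]
         first | positivity | linarith)
  have hsum1 : Summable (fun k : ℕ =>
      |(if m₁ ≤ k ∧ k < m₁ + N then (1 : ℝ) / N else 0) -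
        (if m₂ ≤ k ∧ k < m₂ + N then (1 : ℝ) / N else 0)|) := by
    apply summable_of_ne_finset_zero (s := Finset.range (m₂ + N))
    intro k hk
    simp only [Finset.mem_range, not_lt] at hk
    have ha : ¬ (m₁ ≤ k ∧ k < m₁ + N) := by omega
    have hb : ¬ (m₂ ≤ k ∧ k < m₂ + N) := by omega
    simp [ha, hb]
  have hsum2 : Summable (fun k : ℕ =>
      (if m₁ ≤ k ∧ k < m₂ then (1:ℝ)/N else 0) +
        (if m₁ + N ≤ k ∧ k < m₂ + N then (1:ℝ)/N else 0)) :=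
    (ind_summable _ _ _).add (ind_summable _ _ _)
  calc _ ≤ ∑' k : ℕ, ((if m₁ ≤ k ∧ k < m₂ then (1:ℝ)/N else 0) +
        (if m₁ + N ≤ k ∧ k < m₂ + N then (1:ℝ)/N else 0)) :=
        Summable.tsum_le_tsum hle hsum1 hsum2
    _ = (m₂ - m₁ : ℕ) * (1/N) + ((m₂ + N) - (m₁ + N) : ℕ) * (1/N) := by
        rw [Summable.tsum_add (ind_summable _ _ _) (ind_summable _ _ _), ind_tsum, ind_tsum]
    _ = 2 * (m₂ - m₁ : ℕ) / N := by
        rw [Nat.add_sub_add_right]; ring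

theorem integer_blinding_statistical_distance
    (N B m₁ m₂ : ℕ) (hN : 0 < N) (h₁ : m₁ ≤ B) (h₂ : m₂ ≤ B) :
    ∑' k : ℕ,
        |(if m₁ ≤ k ∧ k < m₁ + N then (1 : ℝ) / N else 0) -
          (if m₂ ≤ k ∧ k < m₂ + N then (1 : ℝ) / N else 0)| ≤
      2 * B / N := by
  have hN' : (0:ℝ) < N := by positivity
  rcases le_total m₁ m₂ with h | h
  · refine (aux N m₁ m₂ h).trans ?_
    have : ((m₂ - m₁ : ℕ) : ℝ) ≤ B := by exact_mod_cast (by omega : m₂ - m₁ ≤ B)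
    gcongr
  · have := aux N m₂ m₁ h
    rw [tsum_congr (fun k => abs_sub_comm _ _)] at this
    refine this.trans ?_
    have : ((m₁ - m₂ : ℕ) : ℝ) ≤ B := by exact_mod_cast (by omega : m₁ - m₂ ≤ B)
    gcongr
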